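/- arXiv:1904.02337 — 3 statements merged into one kernel-verified Lean document; each statement's English description precedes it below -/
import Mathlib

section
/- Let n ≥ 2 be an integer and let f : [0,1] → ℝ^{n−1} be Lipschitz with Lipschitz constant 1/10. Write P(t) = (t, f(t)) ∈ ℝ^n and define Z = {(x_1, x_2, x_3) ∈ [0,1]^3 : x_1, x_2, x_3 pairwise distinct and ‖P(x_3) − P(x_1)‖ = ‖P(x_3) − P(x_2)‖}. Then there is a constant C depending only on n such that for every dyadic length δ ∈ (0, 1/2], #B_δ^3(Z) ≤ C·δ^{−2}·log(1/δ). In particular, Z has lower Minkowski dimension at most 2. -/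
open Filter Set

noncomputable section

/-- A dyadic length: a real number of the form `2 ^ (-k)` for a natural number `k`. -/
def IsDyadicLength (l : ℝ) : Prop := ∃ k : ℕ, l = (2 : ℝ) ^ (-(k : ℤ))

/-- The half-open dyadic cube of sidelength `l` with corner `l • m`. -/
def dyadicCube {ι : Type*} (l : ℝ) (m : ι → ℤ) : Set (ι → ℝ) :=
  {x | ∀ i, l * (m i : ℝ) ≤ x i ∧ x i < l * ((m i : ℝ) + 1)}

/-- The (indices of the) cubes of `B_l` that intersect `E`. -/
def cubesMeeting {ι : Type*} (l : ℝ) (E : Set (ι → ℝ)) : Set (ι → ℤ) :=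
  {m | (dyadicCube l m ∩ E).Nonempty}

/-- `#B_l(E)`, the number of cubes of sidelength `l` meeting `E`. -/
def cubeCount {ι : Type*} (l : ℝ) (E : Set (ι → ℝ)) : ℕ :=
  (cubesMeeting l E).ncard

/-- `E` is a union of cubes of `B_l`. -/
def IsCubeUnion {ι : Type*} (l : ℝ) (E : Set (ι → ℝ)) : Prop :=
  ∃ S : Set (ι → ℤ), E = ⋃ m ∈ S, dyadicCube l m

/-- Lower Minkowski dimension, computed along dyadic scales. -/
def lowerMinkDim {ι : Type*} (Z : Set (ι → ℝ)) : ℝ :=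
  Filter.atTop.liminf fun k : ℕ =>
    Real.log (cubeCount ((2 : ℝ) ^ (-(k : ℤ))) Z) / (k * Real.log 2)

/-- The unit cube `[0,1)^d`. -/
def unitCube (d : ℕ) : Set (Fin d → ℝ) := {x | ∀ i, x i ∈ Set.Ico (0 : ℝ) 1}

/-- `X^n`, viewed inside `ℝ^{dn} = (Fin n × Fin d → ℝ)`. -/
def nthPower {d n : ℕ} (X : Set (Fin d → ℝ)) : Set (Fin n × Fin d → ℝ) :=
  {y | ∀ j, (fun i => y (j, i)) ∈ X}

/-- The point `(x_1, …, x_n) ∈ ℝ^{dn}` built from `x_1, …, x_n ∈ ℝ^d`. -/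
def tuple {d n : ℕ} (x : Fin n → Fin d → ℝ) : Fin n × Fin d → ℝ := fun p => x p.1 p.2

/-- The `j`-th factor of a cube index in `B_l^{dn}`. -/
def cubeRow {d n : ℕ} (M : Fin n × Fin d → ℤ) (j : Fin n) : Fin d → ℤ := fun i => M (j, i)

/-- A cube of `B_l^{dn}` is strongly non-diagonal if its `n` factors are pairwise distinct. -/
def StronglyNonDiagonal {d n : ℕ} (M : Fin n × Fin d → ℤ) : Prop :=
  Function.Injective (cubeRow M)

/-- The point `(t, f t) ∈ ℝ^{m+1}` on the graph of `f : ℝ → ℝ^m`. -/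
def graphPoint {m : ℕ} (f : ℝ → EuclideanSpace ℝ (Fin m)) (t : ℝ) :
    EuclideanSpace ℝ (Fin (m + 1)) :=
  (WithLp.equiv 2 (Fin (m + 1) → ℝ)).symm (Fin.cons t (WithLp.equiv 2 (Fin m → ℝ) (f t)))

/-- The set of triples `(x₁, x₂, x₃) ∈ [0,1]³` of pairwise distinct points whose images on
the graph of `f` form the vertices of an isosceles triangle (apex at the third point). -/
def isoTriples {m : ℕ} (f : ℝ → EuclideanSpace ℝ (Fin m)) : Set (Fin 3 → ℝ) :=
  {x | (∀ i, x i ∈ Set.Icc (0 : ℝ) 1) ∧ x 0 ≠ x 1 ∧ x 0 ≠ x 2 ∧ x 1 ≠ x 2 ∧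
    ‖graphPoint f (x 2) - graphPoint f (x 0)‖ = ‖graphPoint f (x 2) - graphPoint f (x 1)‖}

variable {m : ℕ} (f : ℝ → EuclideanSpace ℝ (Fin m))

lemma inner_graphPoint (s u b a : ℝ) :
    (inner ℝ (graphPoint f s - graphPoint f u) (graphPoint f b - graphPoint f a) : ℝ)
      = (s - u) * (b - a) + (inner ℝ (f s - f u) (f b - f a) : ℝ) := by
  simp [graphPoint, PiLp.inner_apply, RCLike.inner_apply, Fin.sum_univ_succ, PiLp.sub_apply]
  ring

lemma normsq_graphPoint (s u : ℝ) :
    ‖graphPoint f s - graphPoint f u‖ ^ 2 = (s - u) ^ 2 + ‖f s - f u‖ ^ 2 := by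
  rw [← real_inner_self_eq_norm_sq, ← real_inner_self_eq_norm_sq, inner_graphPoint]
  ring

lemma norm_f_sub (hf : LipschitzOnWith (1/10) f (Set.Icc 0 1)) {s u : ℝ}
    (hs : s ∈ Set.Icc (0:ℝ) 1) (hu : u ∈ Set.Icc (0:ℝ) 1) :
    ‖f s - f u‖ ≤ |s - u| / 10 := by
  have := hf.dist_le_mul s hs u hu
  rw [dist_eq_norm, Real.dist_eq] at this
  calc ‖f s - f u‖ ≤ ((1/10 : NNReal) : ℝ) * |s - u| := this
    _ = |s - u| / 10 := by push_cast; ring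

lemma norm_graphPoint_sub (hf : LipschitzOnWith (1/10) f (Set.Icc 0 1)) {s u : ℝ}
    (hs : s ∈ Set.Icc (0:ℝ) 1) (hu : u ∈ Set.Icc (0:ℝ) 1) :
    ‖graphPoint f s - graphPoint f u‖ ≤ 2 * |s - u| := by
  have h1 := norm_f_sub f hf hs hu
  have h2 := normsq_graphPoint f s u
  have h3 : ‖graphPoint f s - graphPoint f u‖ ^ 2 ≤ (2 * |s - u|) ^ 2 := by
    rw [h2]
    nlinarith [norm_nonneg (f s - f u), abs_nonneg (s - u), sq_abs (s - u)]
  exact pow_le_pow_iff_left₀ (norm_nonneg _) (by positivity) (by norm_num) |>.mp h3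


lemma hilb_id1 {E : Type*} [NormedAddCommGroup E] [InnerProductSpace ℝ E] (u w p q : E) :
    (‖u-p‖^2 - ‖u-q‖^2) - (‖w-p‖^2 - ‖w-q‖^2) = 2 * (inner ℝ (u-w) (q-p) : ℝ) := by
  simp only [norm_sub_sq_real, inner_sub_left, inner_sub_right]
  ring

lemma sq_diff_bound {E : Type*} [NormedAddCommGroup E] (x y : E) :
    |‖x‖^2 - ‖y‖^2| ≤ ‖x - y‖ * (‖x‖ + ‖y‖) := by
  have h1 := abs_norm_sub_norm_le x y
  have h2 : ‖x‖^2 - ‖y‖^2 = (‖x‖ - ‖y‖) * (‖x‖ + ‖y‖) := by ring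
  rw [h2, abs_mul, abs_of_nonneg (by positivity : (0:ℝ) ≤ ‖x‖ + ‖y‖)]
  exact mul_le_mul_of_nonneg_right h1 (by positivity)

lemma key (hf : LipschitzOnWith (1/10) f (Set.Icc 0 1)) {x x' : Fin 3 → ℝ}
    (hx : x ∈ isoTriples f) (hx' : x' ∈ isoTriples f) {δ : ℝ} (hδ : 0 < δ)
    (h0 : |x 0 - x' 0| ≤ δ) (h1 : |x 1 - x' 1| ≤ δ) :
    |x 2 - x' 2| * |x 0 - x 1| ≤ 32 * δ := by
  obtain ⟨hxI, -, -, -, heq⟩ := hx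
  obtain ⟨hxI', -, -, -, heq'⟩ := hx'
  set a := x 0; set b := x 1; set t := x 2
  set a' := x' 0; set b' := x' 1; set t' := x' 2
  set P := graphPoint f
  have ha : a ∈ Set.Icc (0:ℝ) 1 := hxI 0
  have hb : b ∈ Set.Icc (0:ℝ) 1 := hxI 1
  have ht : t ∈ Set.Icc (0:ℝ) 1 := hxI 2
  have ha' : a' ∈ Set.Icc (0:ℝ) 1 := hxI' 0
  have hb' : b' ∈ Set.Icc (0:ℝ) 1 := hxI' 1
  have ht' : t' ∈ Set.Icc (0:ℝ) 1 := hxI' 2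
  -- norm bounds
  have hPle : ∀ s u : ℝ, s ∈ Set.Icc (0:ℝ) 1 → u ∈ Set.Icc (0:ℝ) 1 →
      ‖P s - P u‖ ≤ 2 := by
    intro s u hs hu
    refine (norm_graphPoint_sub f hf hs hu).trans ?_
    have : |s - u| ≤ 1 := by
      rw [abs_le]; constructor <;> [linarith [hs.1, hs.2, hu.1, hu.2]; linarith [hs.1, hs.2, hu.1, hu.2]]
    linarith
  set G := ‖P t' - P a‖^2 - ‖P t' - P b‖^2 with hGdef
  -- G = 2 * inner (P t' - P t) (P b - P a)
  have hG1 : G = 2 * (inner ℝ (P t' - P t) (P b - P a) : ℝ) := by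
    have hz : ‖P t - P a‖^2 - ‖P t - P b‖^2 = 0 := by rw [heq]; ring
    have := hilb_id1 (P t') (P t) (P a) (P b)
    rw [hGdef]; rw [show (inner ℝ (P t' - P t) (P b - P a) : ℝ) = ((‖P t' - P a‖^2 - ‖P t' - P b‖^2) - (‖P t - P a‖^2 - ‖P t - P b‖^2))/2 by rw [this]; ring, hz]
    ring
  -- |G| ≤ 16 δ
  have hG2 : |G| ≤ 16 * δ := by
    have hz' : ‖P t' - P a'‖^2 - ‖P t' - P b'‖^2 = 0 := by rw [heq']; ring
    have hA := sq_diff_bound (P t' - P a) (P t' - P a')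
    have hB := sq_diff_bound (P t' - P b) (P t' - P b')
    have e1 : (P t' - P a) - (P t' - P a') = P a' - P a := by abel
    have e2 : (P t' - P b) - (P t' - P b') = P b' - P b := by abel
    rw [e1] at hA; rw [e2] at hB
    have na : ‖P a' - P a‖ ≤ 2 * δ := by
      refine (norm_graphPoint_sub f hf ha' ha).trans ?_
      have : |a' - a| = |a - a'| := abs_sub_comm _ _
      rw [this]; linarith
    have nb : ‖P b' - P b‖ ≤ 2 * δ := by
      refine (norm_graphPoint_sub f hf hb' hb).trans ?_
      have : |b' - b| = |b - b'| := abs_sub_comm _ _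
      rw [this]; linarith
    have n1 := hPle t' a ht' ha
    have n2 := hPle t' a' ht' ha'
    have n3 := hPle t' b ht' hb
    have n4 := hPle t' b' ht' hb'
    have hGsplit : G = (‖P t' - P a‖^2 - ‖P t' - P a'‖^2) - (‖P t' - P b‖^2 - ‖P t' - P b'‖^2) := by
      rw [hGdef]; linarith [hz']
    rw [hGsplit]
    have := abs_sub (‖P t' - P a‖^2 - ‖P t' - P a'‖^2) (‖P t' - P b‖^2 - ‖P t' - P b'‖^2)
    have hA' : |‖P t' - P a‖^2 - ‖P t' - P a'‖^2| ≤ 8 * δ := by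
      refine hA.trans ?_
      nlinarith [norm_nonneg (P a' - P a), norm_nonneg (P t' - P a), norm_nonneg (P t' - P a')]
    have hB' : |‖P t' - P b‖^2 - ‖P t' - P b'‖^2| ≤ 8 * δ := by
      refine hB.trans ?_
      nlinarith [norm_nonneg (P b' - P b), norm_nonneg (P t' - P b), norm_nonneg (P t' - P b')]
    calc |_ - _| ≤ _ := abs_sub _ _
      _ ≤ 16 * δ := by linarith
  -- inner splitting and lower bound
  have hsplit := inner_graphPoint f t' t b a
  set I := (inner ℝ (f t' - f t) (f b - f a) : ℝ) with hIdef
  have hI : |I| ≤ (|t' - t| / 10) * (|b - a| / 10) := by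
    have := abs_real_inner_le_norm (f t' - f t) (f b - f a)
    refine this.trans ?_
    have u1 := norm_f_sub f hf ht' ht
    have u2 := norm_f_sub f hf hb ha
    exact mul_le_mul u1 u2 (norm_nonneg _) (by positivity)
  have habs : |(t' - t) * (b - a)| ≤ |(t' - t) * (b - a) + I| + |I| := by
    calc |(t' - t) * (b - a)| = |((t' - t) * (b - a) + I) + (-I)| := by ring_nf
      _ ≤ |(t' - t) * (b - a) + I| + |(-I)| := abs_add_le _ _
      _ = |(t' - t) * (b - a) + I| + |I| := by rw [abs_neg]
  have hGval : G = 2 * ((t' - t) * (b - a) + I) := by rw [hG1, hsplit]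
  have hGI : |(t' - t) * (b - a) + I| = |G| / 2 := by
    rw [hGval, abs_mul, abs_two]; ring
  have hX : |(t' - t) * (b - a)| = |t - t'| * |a - b| := by
    rw [abs_mul, abs_sub_comm t' t, abs_sub_comm b a]
  rw [hX, hGI] at habs
  rw [show |x 2 - x' 2| * |x 0 - x 1| = |t - t'| * |a - b| from rfl]
  have habs2 : |t - t'| * |a - b| ≤ 8 * δ + (|t - t'| * |a - b|) / 100 := by
    have : (|t' - t| / 10) * (|b - a| / 10) = (|t - t'| * |a - b|) / 100 := by
      rw [abs_sub_comm t' t, abs_sub_comm b a]; ring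
    rw [this] at hI
    linarith
  linarith

/-- helper weight function -/
def phi (r : ℤ) : ℝ := if 2 ≤ |r| then ((|r| : ℝ) - 1)⁻¹ else 0

lemma phi_nonneg (r : ℤ) : 0 ≤ phi r := by
  unfold phi
  split
  · have h2 : (2:ℝ) ≤ |(r:ℝ)| := by
      have : ((2:ℤ):ℝ) ≤ ((|r|:ℤ):ℝ) := by exact_mod_cast ‹2 ≤ |r|›
      push_cast at this; linarith
    exact inv_nonneg.mpr (by linarith)
  · exact le_refl _

lemma phi_neg (r : ℤ) : phi (-r) = phi r := by unfold phi; simp [abs_neg]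

lemma harm_bound (n : ℕ) : ∑ i ∈ Finset.range n, ((i:ℝ)+1)⁻¹ ≤ 1 + Real.log n := by
  have h := harmonic_le_one_add_log n
  have he : (harmonic n : ℝ) = ∑ i ∈ Finset.range n, ((i:ℝ)+1)⁻¹ := by
    unfold harmonic; push_cast; rfl
  linarith

lemma int_card_le {s : Finset ℤ} {W : ℝ} (hW : 0 ≤ W)
    (h : ∀ x ∈ s, ∀ y ∈ s, (x:ℝ) - y ≤ W) : (s.card : ℝ) ≤ W + 1 := by
  rcases s.eq_empty_or_nonempty with rfl | hs
  · simp; linarith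
  · have hsub : s ⊆ Finset.Icc (s.min' hs) (s.min' hs + ⌊W⌋) := by
      intro x hx
      rw [Finset.mem_Icc]
      refine ⟨Finset.min'_le s x hx, ?_⟩
      have h1 : (x : ℝ) - s.min' hs ≤ W := h x hx (s.min' hs) (s.min'_mem hs)
      have h2 : x - s.min' hs ≤ ⌊W⌋ := Int.le_floor.mpr (by push_cast; linarith)
      linarith
    have hc := Finset.card_le_card hsub
    have hcc : (Finset.Icc (s.min' hs) (s.min' hs + ⌊W⌋)).card = (⌊W⌋ + 1).toNat := by
      rw [Int.card_Icc]; congr 1; ring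
    have hfl : (0:ℤ) ≤ ⌊W⌋ := Int.floor_nonneg.mpr hW
    have hton : ((⌊W⌋ + 1).toNat : ℝ) = (⌊W⌋ : ℝ) + 1 := by
      have : ((⌊W⌋ + 1).toNat : ℤ) = ⌊W⌋ + 1 := Int.toNat_of_nonneg (by omega)
      have := congrArg (fun z : ℤ => (z : ℝ)) this
      push_cast at this ⊢; linarith
    calc (s.card : ℝ) ≤ ((⌊W⌋ + 1).toNat : ℝ) := by exact_mod_cast hcc ▸ hc
      _ = (⌊W⌋ : ℝ) + 1 := hton
      _ ≤ W + 1 := by linarith [Int.floor_le W]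

lemma sum_phi_bound {N : ℤ} (hN : 2 ≤ N) (p : ℤ) (hp0 : 0 ≤ p) (hpN : p ≤ N) :
    ∑ q ∈ Finset.Icc (0:ℤ) N, phi (q - p) ≤ 2 * (1 + Real.log N) := by
  have h1 : ∑ q ∈ Finset.Icc (0:ℤ) N, phi (q - p)
      = ∑ r ∈ (Finset.Icc (0:ℤ) N).image (fun q => q - p), phi r :=
    (Finset.sum_image (by intro a _ b _ h; simp only at h; omega)).symm
  have hsub : (Finset.Icc (0:ℤ) N).image (fun q => q - p) ⊆ Finset.Icc (-N) N := by
    intro r hr; simp only [Finset.mem_image, Finset.mem_Icc] at hr ⊢; omega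
  have h2 : ∑ r ∈ (Finset.Icc (0:ℤ) N).image (fun q => q - p), phi r
      ≤ ∑ r ∈ Finset.Icc (-N) N, phi r :=
    Finset.sum_le_sum_of_subset_of_nonneg hsub (fun r _ _ => phi_nonneg r)
  have hIccIco : Finset.Icc (-N) N = Finset.Ico (-N) (N+1) := by
    ext r; simp only [Finset.mem_Icc, Finset.mem_Ico]; omega
  have hunion : Finset.Ico (-N) (0:ℤ) ∪ Finset.Ico (0:ℤ) (N+1) = Finset.Ico (-N) (N+1) :=
    Finset.Ico_union_Ico_eq_Ico (by omega) (by omega)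
  have hdisj : Disjoint (Finset.Ico (-N) (0:ℤ)) (Finset.Ico (0:ℤ) (N+1)) := by
    apply Finset.disjoint_left.mpr
    intro r hr1 hr2; simp only [Finset.mem_Ico] at hr1 hr2; omega
  have hsplit : ∑ r ∈ Finset.Icc (-N) N, phi r
      = ∑ r ∈ Finset.Ico (-N) (0:ℤ), phi r + ∑ r ∈ Finset.Ico (0:ℤ) (N+1), phi r := by
    rw [hIccIco, ← hunion, Finset.sum_union hdisj]
  have hneg : ∑ r ∈ Finset.Ico (-N) (0:ℤ), phi r = ∑ r ∈ Finset.Ico (1:ℤ) (N+1), phi r := by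
    refine Finset.sum_nbij' (i := fun r => -r) (j := fun r => -r) ?_ ?_ ?_ ?_ ?_
    · intro a ha; simp only [Finset.mem_Ico] at ha ⊢; omega
    · intro a ha; simp only [Finset.mem_Ico] at ha ⊢; omega
    · intro a _; ring
    · intro a _; ring
    · intro a _; rw [← phi_neg a]
  have hneg2 : ∑ r ∈ Finset.Ico (1:ℤ) (N+1), phi r ≤ ∑ r ∈ Finset.Ico (0:ℤ) (N+1), phi r :=
    Finset.sum_le_sum_of_subset_of_nonneg
      (by intro r hr; simp only [Finset.mem_Ico] at hr ⊢; omega)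
      (fun r _ _ => phi_nonneg r)
  have h3 : ∑ r ∈ Finset.Ico (0:ℤ) (N+1), phi r = ∑ r ∈ Finset.Ico (2:ℤ) (N+1), phi r := by
    symm
    apply Finset.sum_subset (by intro r hr; simp only [Finset.mem_Ico] at hr ⊢; omega)
    intro r hr hnr
    simp only [Finset.mem_Ico] at hr hnr
    unfold phi
    rw [if_neg (by have : |r| = r := abs_of_nonneg (by omega); omega)]
  have h4 : ∑ r ∈ Finset.Ico (2:ℤ) (N+1), phi r
      = ∑ i ∈ Finset.range (N-1).toNat, ((i:ℝ)+1)⁻¹ := by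
    refine Finset.sum_nbij' (i := fun r => (r-2).toNat) (j := fun i => (i:ℤ)+2) ?_ ?_ ?_ ?_ ?_
    · intro a ha; simp only [Finset.mem_Ico] at ha; simp only [Finset.mem_range]; omega
    · intro a ha; simp only [Finset.mem_range] at ha; simp only [Finset.mem_Ico]; omega
    · intro a ha; simp only [Finset.mem_Ico] at ha
      show ((a - 2).toNat : ℤ) + 2 = a; omega
    · intro a ha; show (((a:ℤ) + 2) - 2).toNat = a; omega
    · intro a ha
      simp only [Finset.mem_Ico] at ha
      unfold phi
      rw [if_pos (by have : |a| = a := abs_of_nonneg (by omega); omega)]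
      congr 1
      have h5 : (((a-2).toNat : ℤ) : ℝ) = (a:ℝ) - 2 := by
        rw [Int.toNat_of_nonneg (by omega)]; push_cast; ring
      push_cast at h5 ⊢
      rw [abs_of_nonneg (by linarith [h5] : (0:ℝ) ≤ (a:ℝ))]
      linarith [h5]
  have h6 : ∑ i ∈ Finset.range (N-1).toNat, ((i:ℝ)+1)⁻¹ ≤ 1 + Real.log N := by
    refine (harm_bound _).trans ?_
    have hle : (((N-1).toNat : ℕ) : ℝ) ≤ (N : ℝ) := by
      have : ((N-1).toNat : ℤ) = N - 1 := Int.toNat_of_nonneg (by omega)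
      have := congrArg (fun z : ℤ => (z : ℝ)) this
      push_cast at this ⊢; linarith
    have hpos : (0:ℝ) < ((N-1).toNat : ℕ) := by
      have : 1 ≤ (N-1).toNat := by omega
      exact_mod_cast this
    have := Real.log_le_log hpos hle
    linarith
  have hall := h1 ▸ h2
  linarith [hall, hsplit, hneg, hneg2, h3 ▸ h4 ▸ h6,
    Finset.sum_nonneg (fun r (_ : r ∈ Finset.Ico (0:ℤ) (N+1)) => phi_nonneg r)]




set_option maxHeartbeats 2000000 in
lemma count_bound (hf : LipschitzOnWith (1/10) f (Set.Icc 0 1)) {δ : ℝ}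
    (hδ : 0 < δ) (hδ2 : δ ≤ 1/2) :
    (cubeCount δ (isoTriples f) : ℝ) ≤ 1000 * δ⁻¹^2 * Real.log (1/δ) := by
  classical
  set Z := isoTriples f with hZdef
  have hinv2 : (2:ℝ) ≤ δ⁻¹ := by
    rw [le_inv_comm₀ (by norm_num) hδ]; linarith
  obtain ⟨N, hNr, hN2, hNmax⟩ :
      ∃ N : ℤ, (N:ℝ) ≤ δ⁻¹ ∧ 2 ≤ N ∧ ∀ r : ℤ, (r:ℝ) ≤ δ⁻¹ → r ≤ N :=
    ⟨⌊δ⁻¹⌋, Int.floor_le _, Int.le_floor.mpr (by exact_mod_cast hinv2),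
      fun r hr => Int.le_floor.mpr hr⟩
  have hNr2 : (2:ℝ) ≤ (N:ℝ) := by exact_mod_cast hN2
  -- box membership
  have hbox : ∀ m ∈ cubesMeeting δ Z, ∀ i, (0:ℤ) ≤ m i ∧ m i ≤ N := by
    rintro m ⟨x, hxc, hxZ⟩ i
    have hx01 : x i ∈ Set.Icc (0:ℝ) 1 := hxZ.1 i
    obtain ⟨hle, hlt⟩ := hxc i
    constructor
    · by_contra hneg
      push_neg at hneg
      have h1 : ((m i : ℝ) + 1) ≤ 0 := by
        have : (m i : ℤ) + 1 ≤ 0 := by omega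
        exact_mod_cast this
      nlinarith [hx01.1]
    · have h1 : δ * m i ≤ 1 := le_trans hle hx01.2
      have h2 : (m i : ℝ) ≤ δ⁻¹ := by
        rw [show (δ⁻¹ : ℝ) = 1/δ from (one_div δ).symm, le_div_iff₀ hδ]
        nlinarith
      exact hNmax _ h2
  have hfin : (cubesMeeting δ Z).Finite := by
    apply Set.Finite.subset
      (Finset.finite_toSet (Fintype.piFinset fun _ : Fin 3 => Finset.Icc (0:ℤ) N))
    intro m hm
    simp only [Finset.coe_sort_coe, Finset.mem_coe, Fintype.mem_piFinset, Finset.mem_Icc]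
    exact fun i => hbox m hm i
  set T : Finset (Fin 3 → ℤ) := hfin.toFinset with hTdef
  have hcc : (cubeCount δ Z : ℝ) = (T.card : ℝ) := by
    rw [cubeCount, Set.ncard_eq_toFinset_card _ hfin]
  set B : Finset (ℤ × ℤ) := (Finset.Icc (0:ℤ) N) ×ˢ (Finset.Icc (0:ℤ) N) with hBdef
  have hmapsto : ∀ m ∈ T, ((m 0, m 1) : ℤ × ℤ) ∈ B := by
    intro m hm
    rw [Set.Finite.mem_toFinset] at hm
    simp only [hBdef, Finset.mem_product, Finset.mem_Icc]
    exact ⟨hbox m hm 0, hbox m hm 1⟩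
  have hfib := Finset.card_eq_sum_card_fiberwise hmapsto
  set Bnd : ℤ × ℤ → ℝ := fun pq =>
    (if |pq.1 - pq.2| ≤ 1 then ((N:ℝ)+1) else 0) + 2 + (32/δ) * phi (pq.2 - pq.1) with hBnddef
  have hfibBnd : ∀ pq ∈ B, (((T.filter fun m => (m 0, m 1) = pq).card : ℕ) : ℝ) ≤ Bnd pq := by
    intro pq _
    set F := T.filter fun m => (m 0, m 1) = pq with hFdef
    have hFmem : ∀ m ∈ F, m ∈ cubesMeeting δ Z ∧ m 0 = pq.1 ∧ m 1 = pq.2 := by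
      intro m hm
      rw [hFdef, Finset.mem_filter, Set.Finite.mem_toFinset, Prod.mk.injEq] at hm
      exact ⟨hm.1, hm.2.1, hm.2.2⟩
    have hinj : Set.InjOn (fun m : Fin 3 → ℤ => m 2) ↑F := by
      intro a ha b hb h
      rw [Finset.mem_coe] at ha hb
      have h1 := hFmem a ha
      have h2 := hFmem b hb
      funext i
      fin_cases i
      · exact h1.2.1.trans h2.2.1.symm
      · exact h1.2.2.trans h2.2.2.symm
      · exact h
    have hcardF : (F.card : ℝ) = ((F.image fun m => m 2).card : ℝ) := by
      rw [Finset.card_image_of_injOn hinj]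
    by_cases hd : |pq.1 - pq.2| ≤ 1
    · -- trivial bound
      have himg : F.image (fun m => m 2) ⊆ Finset.Icc (0:ℤ) N := by
        intro r hr
        obtain ⟨m, hm, rfl⟩ := Finset.mem_image.mp hr
        rw [Finset.mem_Icc]
        exact hbox m (hFmem m hm).1 2
      have := Finset.card_le_card himg
      rw [Int.card_Icc] at this
      have h1 : (F.card : ℝ) ≤ ((N:ℝ)+1) := by
        rw [hcardF]
        calc ((F.image fun m => m 2).card : ℝ) ≤ (((N + 1 - 0).toNat : ℕ) : ℝ) := by
              exact_mod_cast this
          _ = ((N:ℝ)+1) := by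
              have h2 : ((N + 1 - 0).toNat : ℤ) = N + 1 := by
                rw [Int.sub_zero]; exact Int.toNat_of_nonneg (by linarith)
              have := congrArg (fun z : ℤ => (z : ℝ)) h2
              push_cast at this ⊢; linarith
      rw [hBnddef]
      simp only [if_pos hd]
      have := mul_nonneg (by positivity : (0:ℝ) ≤ 32/δ) (phi_nonneg (pq.2 - pq.1))
      linarith
    · -- the interesting case
      push_neg at hd
      have hd2 : (2:ℤ) ≤ |pq.1 - pq.2| := hd
      set dr : ℝ := ((|pq.1 - pq.2| : ℤ) : ℝ) with hdrdef
      have hdr2 : (2:ℝ) ≤ dr := by rw [hdrdef]; exact_mod_cast hd2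
      set W : ℝ := 32/((dr - 1)*δ) + 1 with hWdef
      have hW0 : 0 ≤ W := by
        have : 0 < (dr - 1) * δ := by nlinarith
        positivity
      have hWcard : ((F.image fun m => m 2).card : ℝ) ≤ W + 1 := by
        apply int_card_le hW0
        intro r hr r' hr'
        obtain ⟨m, hm, rfl⟩ := Finset.mem_image.mp hr
        obtain ⟨m', hm', rfl⟩ := Finset.mem_image.mp hr'
        obtain ⟨hmC, hm0, hm1⟩ := hFmem m hm
        obtain ⟨hmC', hm0', hm1'⟩ := hFmem m' hm'
        obtain ⟨z, hzc, hzZ⟩ := hmC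
        obtain ⟨z', hzc', hzZ'⟩ := hmC'
        set pr : ℝ := ((pq.1 : ℤ) : ℝ) with hprdef
        set qr : ℝ := ((pq.2 : ℤ) : ℝ) with hqrdef
        have hc0 : δ * pr ≤ z 0 ∧ z 0 < δ * (pr + 1) := by
          have := hzc 0; rw [hm0] at this; exact this
        have hc1 : δ * qr ≤ z 1 ∧ z 1 < δ * (qr + 1) := by
          have := hzc 1; rw [hm1] at this; exact this
        have hc0' : δ * pr ≤ z' 0 ∧ z' 0 < δ * (pr + 1) := by
          have := hzc' 0; rw [hm0'] at this; exact this
        have hc1' : δ * qr ≤ z' 1 ∧ z' 1 < δ * (qr + 1) := by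
          have := hzc' 1; rw [hm1'] at this; exact this
        have h00 : |z 0 - z' 0| ≤ δ := by
          rw [abs_le]; constructor <;> nlinarith [hc0.1, hc0.2, hc0'.1, hc0'.2]
        have h11 : |z 1 - z' 1| ≤ δ := by
          rw [abs_le]; constructor <;> nlinarith [hc1.1, hc1.2, hc1'.1, hc1'.2]
        have hkey := key f hf hzZ hzZ' hδ h00 h11
        -- lower bound on |z 0 - z 1|
        have hab : (dr - 1) * δ ≤ |z 0 - z 1| := by
          have t1 := abs_sub_abs_le_abs_sub (δ*(pr - qr)) (z 0 - z 1)
          have t2 : |δ*(pr - qr) - (z 0 - z 1)| ≤ δ := by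
            rw [abs_le]; constructor <;> nlinarith [hc0.1, hc0.2, hc1.1, hc1.2]
          have t3 : |δ*(pr - qr)| = δ * |pr - qr| := by
            rw [abs_mul, abs_of_pos hδ]
          have t4 : |pr - qr| = dr := by
            rw [hdrdef, hprdef, hqrdef]
            push_cast
            ring_nf
          rw [t3, t4] at t1
          nlinarith
        have habpos : (0:ℝ) < (dr - 1) * δ := by nlinarith
        have ht : |z 2 - z' 2| ≤ 32/(dr - 1) := by
          have h1 : |z 2 - z' 2| * ((dr - 1) * δ) ≤ 32 * δ := by
            calc |z 2 - z' 2| * ((dr - 1) * δ) ≤ |z 2 - z' 2| * |z 0 - z 1| :=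
                  mul_le_mul_of_nonneg_left hab (abs_nonneg _)
              _ ≤ 32 * δ := hkey
          rw [le_div_iff₀ (by nlinarith : (0:ℝ) < dr - 1)]
          nlinarith [abs_nonneg (z 2 - z' 2)]
        -- conclude
        have hc2 : δ * (m 2 : ℝ) ≤ z 2 := (hzc 2).1
        have hc2' : z' 2 < δ * ((m' 2 : ℝ) + 1) := (hzc' 2).2
        have hzz : z 2 - z' 2 ≤ |z 2 - z' 2| := le_abs_self _
        have hfinal : δ * ((m 2 : ℝ) - (m' 2 : ℝ)) ≤ 32/(dr-1) + δ := by nlinarith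
        have h8 : ((m 2:ℝ) - (m' 2:ℝ) - 1) * δ ≤ 32/(dr-1) := by nlinarith
        have h9 := (le_div_iff₀ hδ).mpr h8
        rw [hWdef, ← div_div]
        linarith
      rw [hBnddef]
      simp only [if_neg (not_le.mpr (lt_of_lt_of_le (by norm_num) hd2) : ¬ |pq.1 - pq.2| ≤ 1)]
      have hphi : phi (pq.2 - pq.1) = (dr - 1)⁻¹ := by
        unfold phi
        rw [if_pos (by rwa [abs_sub_comm] : 2 ≤ |pq.2 - pq.1|)]
        congr 1
        rw [hdrdef]
        push_cast
        rw [abs_sub_comm]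
      rw [hphi]
      have heq2 : (32/δ) * (dr - 1)⁻¹ = 32/((dr-1)*δ) := by
        field_simp
      rw [heq2]
      rw [hcardF]
      have hfin2 : (0:ℝ) + 2 + 32/((dr-1)*δ) = W + 1 := by rw [hWdef]; ring
      rw [hfin2]
      exact hWcard
  -- assemble the sum
  have hcast : (T.card : ℝ) = ∑ pq ∈ B, (((T.filter fun m => (m 0, m 1) = pq).card : ℕ) : ℝ) := by
    rw [hfib]; push_cast; rfl
  have hsum1 : (T.card : ℝ) ≤ ∑ pq ∈ B, Bnd pq := by
    rw [hcast]; exact Finset.sum_le_sum hfibBnd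
  have hsum2 : ∑ pq ∈ B, Bnd pq
      = ∑ p ∈ Finset.Icc (0:ℤ) N, ∑ q ∈ Finset.Icc (0:ℤ) N, Bnd (p, q) := by
    rw [hBdef, Finset.sum_product]
  set L := Real.log (1/δ) with hLdef
  have hlog2 : Real.log 2 ≤ L := by
    rw [hLdef]
    apply Real.log_le_log (by norm_num)
    rw [one_div]; exact hinv2
  have hL1 : (1:ℝ)/2 ≤ L := le_trans (by linarith [Real.log_two_gt_d9]) hlog2
  have hNrpos : (0:ℝ) < (N:ℝ) := by linarith
  have hlogN : Real.log (N:ℝ) ≤ L := by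
    rw [hLdef]
    apply Real.log_le_log hNrpos
    rw [one_div]; exact hNr
  have hlgN0 : 0 ≤ Real.log (N:ℝ) := Real.log_nonneg (by linarith)
  have hcardIcc : (((Finset.Icc (0:ℤ) N).card : ℕ) : ℝ) = (N:ℝ) + 1 := by
    rw [Int.card_Icc]
    have h2 : ((N + 1 - 0).toNat : ℤ) = N + 1 := by
      rw [Int.sub_zero]; exact Int.toNat_of_nonneg (by linarith)
    exact_mod_cast h2
  have hIB : ∀ p ∈ Finset.Icc (0:ℤ) N, ∑ q ∈ Finset.Icc (0:ℤ) N, Bnd (p, q)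
      ≤ 5*((N:ℝ)+1) + (64/δ)*(1 + Real.log (N:ℝ)) := by
    intro p hp
    rw [Finset.mem_Icc] at hp
    have e1 : ∑ q ∈ Finset.Icc (0:ℤ) N, Bnd (p, q)
        = (∑ q ∈ Finset.Icc (0:ℤ) N, (if |p - q| ≤ 1 then ((N:ℝ)+1) else 0))
          + (∑ q ∈ Finset.Icc (0:ℤ) N, (2:ℝ))
          + (32/δ) * ∑ q ∈ Finset.Icc (0:ℤ) N, phi (q - p) := by
      rw [hBnddef, Finset.mul_sum, ← Finset.sum_add_distrib, ← Finset.sum_add_distrib]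
    have hS1 : ∑ q ∈ Finset.Icc (0:ℤ) N, (if |p - q| ≤ 1 then ((N:ℝ)+1) else 0)
        ≤ 3 * ((N:ℝ)+1) := by
      rw [← Finset.sum_filter]
      have hsub : (Finset.Icc (0:ℤ) N).filter (fun q => |p - q| ≤ 1)
          ⊆ Finset.Icc (p-1) (p+1) := by
        intro q hq
        rw [Finset.mem_filter] at hq
        rw [Finset.mem_Icc]
        have h9 := abs_le.mp hq.2
        exact ⟨by linarith [h9.1], by linarith [h9.2]⟩
      have hcard3 := Finset.card_le_card hsub
      rw [Int.card_Icc, (by rw [show p+1+1-(p-1) = 3 by ring]; rfl : (p+1+1-(p-1)).toNat = 3)] at hcard3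
      rw [Finset.sum_const, nsmul_eq_mul]
      have hN1 : (0:ℝ) ≤ (N:ℝ)+1 := by linarith
      exact mul_le_mul_of_nonneg_right (by exact_mod_cast hcard3) hN1
    have hS2 : ∑ q ∈ Finset.Icc (0:ℤ) N, (2:ℝ) ≤ 2*((N:ℝ)+1) := by
      rw [Finset.sum_const, nsmul_eq_mul, hcardIcc]
      linarith
    have hS3 : (32/δ) * ∑ q ∈ Finset.Icc (0:ℤ) N, phi (q - p)
        ≤ (32/δ) * (2 * (1 + Real.log (N:ℝ))) :=
      mul_le_mul_of_nonneg_left (sum_phi_bound hN2 p hp.1 hp.2) (by positivity)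
    rw [e1]
    have hexp : (32/δ) * (2 * (1 + Real.log (N:ℝ))) = (64/δ)*(1 + Real.log (N:ℝ)) := by
      ring
    rw [hexp] at hS3
    linarith
  have houter : ∑ p ∈ Finset.Icc (0:ℤ) N, ∑ q ∈ Finset.Icc (0:ℤ) N, Bnd (p, q)
      ≤ ((N:ℝ)+1) * (5*((N:ℝ)+1) + (64/δ)*(1 + Real.log (N:ℝ))) := by
    calc ∑ p ∈ Finset.Icc (0:ℤ) N, ∑ q ∈ Finset.Icc (0:ℤ) N, Bnd (p, q)
        ≤ ∑ _p ∈ Finset.Icc (0:ℤ) N, (5*((N:ℝ)+1) + (64/δ)*(1 + Real.log (N:ℝ))) :=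
          Finset.sum_le_sum hIB
      _ = ((N:ℝ)+1) * (5*((N:ℝ)+1) + (64/δ)*(1 + Real.log (N:ℝ))) := by
          rw [Finset.sum_const, nsmul_eq_mul, hcardIcc]
  -- final arithmetic
  have hdinv : (0:ℝ) < δ⁻¹ := by positivity
  have hN1 : (N:ℝ)+1 ≤ (3/2) * δ⁻¹ := by linarith
  have hdiv64 : (64:ℝ)/δ = 64 * δ⁻¹ := by rw [div_eq_mul_inv]
  have step1 : ((N:ℝ)+1) * (5*((N:ℝ)+1) + (64/δ)*(1 + Real.log (N:ℝ)))
      ≤ ((3/2)*δ⁻¹) * (5*((3/2)*δ⁻¹) + (64*δ⁻¹)*(1 + L)) := by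
    have hpos2 : (0:ℝ) ≤ 5*((N:ℝ)+1) + (64/δ)*(1 + Real.log (N:ℝ)) := by
      have : (0:ℝ) ≤ (64/δ)*(1 + Real.log (N:ℝ)) :=
        mul_nonneg (by positivity) (by linarith)
      linarith
    apply mul_le_mul hN1 ?_ hpos2 (by positivity)
    apply add_le_add (by linarith)
    rw [hdiv64]
    apply mul_le_mul_of_nonneg_left (by linarith) (by positivity)
  have step2 : ((3/2)*δ⁻¹) * (5*((3/2)*δ⁻¹) + (64*δ⁻¹)*(1 + L)) ≤ 1000 * δ⁻¹^2 * L := by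
    nlinarith [mul_nonneg (by linarith : (0:ℝ) ≤ L - 1/2) (sq_nonneg δ⁻¹), sq_nonneg δ⁻¹, hdinv]
  calc (cubeCount δ Z : ℝ) = (T.card : ℝ) := hcc
    _ ≤ ∑ pq ∈ B, Bnd pq := hsum1
    _ = ∑ p ∈ Finset.Icc (0:ℤ) N, ∑ q ∈ Finset.Icc (0:ℤ) N, Bnd (p, q) := hsum2
    _ ≤ ((N:ℝ)+1) * (5*((N:ℝ)+1) + (64/δ)*(1 + Real.log (N:ℝ))) := houter
    _ ≤ ((3/2)*δ⁻¹) * (5*((3/2)*δ⁻¹) + (64*δ⁻¹)*(1 + L)) := step1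
    _ ≤ 1000 * δ⁻¹^2 * L := step2



lemma vlim : Tendsto (fun k : ℕ =>
    (Real.log 1000 + 2*((k:ℝ)*Real.log 2) + Real.log ((k:ℝ) * Real.log 2)) / ((k:ℝ) * Real.log 2))
    atTop (nhds 2) := by
  have hl2 : (0:ℝ) < Real.log 2 := Real.log_pos (by norm_num)
  have T1 : Tendsto (fun k : ℕ => (k:ℝ) * Real.log 2) atTop atTop :=
    tendsto_natCast_atTop_atTop.atTop_mul_const hl2
  have ha : Tendsto (fun k : ℕ => Real.log 1000 / ((k:ℝ) * Real.log 2)) atTop (nhds 0) := by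
    have := (tendsto_inv_atTop_zero.comp T1).const_mul (Real.log 1000)
    simpa [div_eq_mul_inv, Function.comp] using this
  have hc : Tendsto (fun k : ℕ => Real.log ((k:ℝ) * Real.log 2) / ((k:ℝ) * Real.log 2))
      atTop (nhds 0) := by
    have hlittle := Real.isLittleO_log_id_atTop.tendsto_div_nhds_zero
    exact hlittle.comp T1
  have hev : ∀ᶠ k : ℕ in atTop, Real.log 1000 / ((k:ℝ) * Real.log 2) + 2
        + Real.log ((k:ℝ) * Real.log 2) / ((k:ℝ) * Real.log 2)
      = (Real.log 1000 + 2*((k:ℝ)*Real.log 2) + Real.log ((k:ℝ) * Real.log 2))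
          / ((k:ℝ) * Real.log 2) := by
    filter_upwards [Filter.eventually_ge_atTop 1] with k hk
    have hkpos : (0:ℝ) < (k:ℝ) * Real.log 2 := by
      have : (1:ℝ) ≤ (k:ℝ) := by exact_mod_cast hk
      nlinarith
    field_simp
  have := (ha.add (tendsto_const_nhds (x := (2:ℝ)))).add hc
  rw [show (0:ℝ) + 2 + 0 = 2 by norm_num] at this
  exact Tendsto.congr' hev this


/-- **The covering estimate for `Z` (Section 5.2).** Here `n = m + 1 ≥ 2`. -/
theorem isoTriples_cover_count (m : ℕ) (hm : 1 ≤ m) :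
    ∃ C : ℝ, 0 < C ∧
      ∀ f : ℝ → EuclideanSpace ℝ (Fin m), LipschitzOnWith (1 / 10) f (Set.Icc 0 1) →
        (∀ δ : ℝ, IsDyadicLength δ → δ ≤ 1 / 2 →
          (cubeCount δ (isoTriples f) : ℝ) ≤ C * δ⁻¹ ^ 2 * Real.log (1 / δ)) ∧
        lowerMinkDim (isoTriples f) ≤ 2 := by
  refine ⟨1000, by norm_num, fun f hf => ⟨?_, ?_⟩⟩
  · rintro δ ⟨k, rfl⟩ hδ2
    exact count_bound f hf (by positivity) hδ2
  · -- dimension bound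
    have hl2 : (0:ℝ) < Real.log 2 := Real.log_pos (by norm_num)
    set u : ℕ → ℝ := fun k =>
      Real.log (cubeCount ((2 : ℝ) ^ (-(k : ℤ))) (isoTriples f)) / ((k:ℝ) * Real.log 2) with hudef
    set v : ℕ → ℝ := fun k =>
      (Real.log 1000 + 2*((k:ℝ)*Real.log 2) + Real.log ((k:ℝ) * Real.log 2))
        / ((k:ℝ) * Real.log 2) with hvdef
    have hu0 : ∀ k, 0 ≤ u k := by
      intro k
      apply div_nonneg _ (by positivity)
      rcases Nat.eq_zero_or_pos (cubeCount ((2 : ℝ) ^ (-(k : ℤ))) (isoTriples f)) with h | h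
      · rw [h]; simp
      · apply Real.log_nonneg
        exact_mod_cast h
    have hev : ∀ᶠ k : ℕ in atTop, u k ≤ v k := by
      filter_upwards [Filter.eventually_ge_atTop 1] with k hk
      set δ : ℝ := (2 : ℝ) ^ (-(k : ℤ)) with hδdef
      have hδpos : 0 < δ := by positivity
      have hδ2 : δ ≤ 1/2 := by
        rw [hδdef, show (1:ℝ)/2 = (2:ℝ)^(-1:ℤ) by norm_num]
        apply zpow_le_zpow_right₀ (by norm_num)
        omega
      have hcount := count_bound f hf hδpos hδ2
      have hkpos : (0:ℝ) < (k:ℝ) * Real.log 2 := by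
        have : (1:ℝ) ≤ (k:ℝ) := by exact_mod_cast hk
        nlinarith
      have hinv : δ⁻¹ = (2:ℝ) ^ (k:ℤ) := by
        rw [hδdef, ← zpow_neg, neg_neg]
      have hlog : Real.log (1/δ) = (k:ℝ) * Real.log 2 := by
        rw [one_div, hinv, Real.log_zpow]
        norm_num
      set M : ℝ := 1000 * ((2:ℝ)^(k:ℤ))^2 * ((k:ℝ) * Real.log 2) with hMdef
      have hcM : (cubeCount δ (isoTriples f) : ℝ) ≤ M := by
        rw [hMdef, ← hinv, ← hlog]; exact hcount
      have hMpos : 0 < M := by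
        rw [hMdef]; positivity
      have hlogle : Real.log (cubeCount δ (isoTriples f)) ≤ Real.log M := by
        rcases Nat.eq_zero_or_pos (cubeCount δ (isoTriples f)) with h | h
        · rw [h]
          simp only [Nat.cast_zero, Real.log_zero]
          have hM1 : (1:ℝ) ≤ M := by
            rw [hMdef]
            have h1 : (1:ℝ) ≤ ((2:ℝ)^(k:ℤ))^2 := by
              have : (1:ℝ) ≤ (2:ℝ)^(k:ℤ) := one_le_zpow₀ (by norm_num) (by omega)
              nlinarith
            have h2 : Real.log 2 ≤ (k:ℝ) * Real.log 2 := by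
              have : (1:ℝ) ≤ (k:ℝ) := by exact_mod_cast hk
              nlinarith
            nlinarith [Real.log_two_gt_d9]
          exact Real.log_nonneg hM1
        · exact Real.log_le_log (by exact_mod_cast h) hcM
      have hlogM : Real.log M = Real.log 1000 + 2*((k:ℝ)*Real.log 2) + Real.log ((k:ℝ) * Real.log 2) := by
        rw [hMdef, Real.log_mul (by positivity) (by positivity),
          Real.log_mul (by norm_num) (by positivity), Real.log_pow, Real.log_zpow]
        push_cast
        ring
      rw [hudef, hvdef]
      simp only
      rw [← hlogM]
      gcongr
    have hbdd : atTop.IsBoundedUnder (· ≥ ·) u := isBoundedUnder_of ⟨0, fun k => hu0 k⟩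
    have hcob : atTop.IsCoboundedUnder (· ≥ ·) v := vlim.isCoboundedUnder_ge
    calc lowerMinkDim (isoTriples f) = Filter.atTop.liminf u := rfl
      _ ≤ Filter.atTop.liminf v := Filter.liminf_le_liminf hev hbdd hcob
      _ = 2 := vlim.liminf_eq

end
end

section
/- Let n ≥ 2 be an integer and let f : [0,1] → ℝ^{n−1} be Lipschitz with Lipschitz constant 1/10. Write P(t) = (t, f(t)) ∈ ℝ^n and define Z = {(x_1, x_2, x_3) ∈ [0,1]^3 : x_1, x_2, x_3 pairwise distinct and ‖P(x_3) − P(x_1)‖ = ‖P(x_3) − P(x_2)‖}. Then there is a constant C depending only on n such that for every dyadic length δ ∈ (0,1), every integer k ≥ 0, and all intervals I_1, I_2 ∈ B_δ^1 contained in [0,1) with dist(I_1, I_2) ≥ 2^k δ, the number of intervals I_3 ∈ B_δ^1 such that (I_1 × I_2 × I_3) ∩ Z ≠ ∅ is at most C·(2^{−k}·δ^{−1} + 1). -/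
open Filter Set
open scoped RealInnerProductSpace

noncomputable section

lemma inner_graph {m : ℕ} (f : ℝ → EuclideanSpace ℝ (Fin m)) (a b c d : ℝ) :
    ⟪graphPoint f a - graphPoint f b, graphPoint f c - graphPoint f d⟫
      = (a - b) * (c - d) + ⟪f a - f b, f c - f d⟫ := by
  simp only [PiLp.inner_apply, RCLike.inner_apply, conj_trivial, PiLp.sub_apply]
  rw [Fin.sum_univ_succ]
  simp [graphPoint, Fin.sum_univ_succ]
  ring

lemma lip_inner {m : ℕ} {f : ℝ → EuclideanSpace ℝ (Fin m)}
    (hf : LipschitzOnWith (1 / 10) f (Set.Icc 0 1)) {a b c d : ℝ}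
    (ha : a ∈ Set.Icc (0:ℝ) 1) (hb : b ∈ Set.Icc (0:ℝ) 1)
    (hc : c ∈ Set.Icc (0:ℝ) 1) (hd : d ∈ Set.Icc (0:ℝ) 1) :
    |⟪f a - f b, f c - f d⟫| ≤ |a - b| * |c - d| / 100 := by
  have h1 : ‖f a - f b‖ ≤ (1/10) * |a - b| := by
    have := hf.norm_sub_le ha hb
    simpa using this
  have h2 : ‖f c - f d‖ ≤ (1/10) * |c - d| := by
    have := hf.norm_sub_le hc hd
    simpa using this
  have := abs_real_inner_le_norm (f a - f b) (f c - f d)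
  have hnn1 : (0:ℝ) ≤ ‖f a - f b‖ := norm_nonneg _
  have hnn2 : (0:ℝ) ≤ ‖f c - f d‖ := norm_nonneg _
  nlinarith [abs_nonneg (a-b), abs_nonneg (c-d)]

lemma norm_graph_le {m : ℕ} {f : ℝ → EuclideanSpace ℝ (Fin m)}
    (hf : LipschitzOnWith (1 / 10) f (Set.Icc 0 1)) {a b : ℝ}
    (ha : a ∈ Set.Icc (0:ℝ) 1) (hb : b ∈ Set.Icc (0:ℝ) 1) :
    ‖graphPoint f a - graphPoint f b‖ ≤ 2 * |a - b| := by
  have hsq : ‖graphPoint f a - graphPoint f b‖ ^ 2 = (a-b)^2 + ⟪f a - f b, f a - f b⟫ := by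
    rw [← real_inner_self_eq_norm_sq, inner_graph]; ring
  have hE := lip_inner hf ha hb ha hb
  have h4 : ‖graphPoint f a - graphPoint f b‖ ^ 2 ≤ (2 * |a - b|) ^ 2 := by
    rw [hsq]
    have : |a-b|^2 = (a-b)^2 := sq_abs _
    nlinarith [le_abs_self (⟪f a - f b, f a - f b⟫), abs_mul_abs_self (a-b)]
  nlinarith [norm_nonneg (graphPoint f a - graphPoint f b), abs_nonneg (a-b)]

lemma iso_identity {E : Type*} [NormedAddCommGroup E] [InnerProductSpace ℝ E]
    (ps₁ pu₁ pt₁ ps₂ pu₂ pt₂ : E)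
    (h1 : ‖pt₁ - ps₁‖ = ‖pt₁ - pu₁‖)
    (h2 : ‖pt₂ - ps₂‖ = ‖pt₂ - pu₂‖) :
    2 * ⟪pt₂ - pt₁, pu₁ - ps₁⟫ =
      ⟪ps₂ - ps₁, pt₂ - ps₁⟫ + ⟪ps₂ - ps₁, pt₂ - ps₂⟫
      - ⟪pu₂ - pu₁, pt₂ - pu₁⟫ - ⟪pu₂ - pu₁, pt₂ - pu₂⟫ := by
  have h1' : ⟪pt₁ - ps₁, pt₁ - ps₁⟫ = ⟪pt₁ - pu₁, pt₁ - pu₁⟫ := by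
    rw [real_inner_self_eq_norm_sq, real_inner_self_eq_norm_sq, h1]
  have h2' : ⟪pt₂ - ps₂, pt₂ - ps₂⟫ = ⟪pt₂ - pu₂, pt₂ - pu₂⟫ := by
    rw [real_inner_self_eq_norm_sq, real_inner_self_eq_norm_sq, h2]
  simp only [inner_sub_left, inner_sub_right] at h1' h2' ⊢
  linarith [real_inner_comm ps₂ ps₁, real_inner_comm pu₂ pu₁, real_inner_comm pt₂ ps₁,
    real_inner_comm pt₂ ps₂, real_inner_comm pt₂ pu₁, real_inner_comm pt₂ pu₂,
    real_inner_comm pt₁ ps₁, real_inner_comm pt₁ pu₁, real_inner_comm pt₂ pt₁,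
    real_inner_comm pu₁ ps₁]

lemma key_est {m : ℕ} {f : ℝ → EuclideanSpace ℝ (Fin m)}
    (hf : LipschitzOnWith (1 / 10) f (Set.Icc 0 1)) {δ : ℝ} (hδ : 0 < δ) (k : ℕ)
    {s₁ u₁ t₁ s₂ u₂ t₂ : ℝ}
    (hs₁ : s₁ ∈ Set.Icc (0:ℝ) 1) (hu₁ : u₁ ∈ Set.Icc (0:ℝ) 1) (ht₁ : t₁ ∈ Set.Icc (0:ℝ) 1)
    (hs₂ : s₂ ∈ Set.Icc (0:ℝ) 1) (hu₂ : u₂ ∈ Set.Icc (0:ℝ) 1) (ht₂ : t₂ ∈ Set.Icc (0:ℝ) 1)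
    (e₁ : ‖graphPoint f t₁ - graphPoint f s₁‖ = ‖graphPoint f t₁ - graphPoint f u₁‖)
    (e₂ : ‖graphPoint f t₂ - graphPoint f s₂‖ = ‖graphPoint f t₂ - graphPoint f u₂‖)
    (hss : |s₂ - s₁| ≤ δ) (huu : |u₂ - u₁| ≤ δ)
    (hsep : 2 ^ k * δ ≤ |u₁ - s₁|) :
    |t₂ - t₁| ≤ 9 * (2:ℝ) ^ (-(k : ℤ)) := by
  set P := graphPoint f with hP
  have hone : ∀ x y : ℝ, x ∈ Set.Icc (0:ℝ) 1 → y ∈ Set.Icc (0:ℝ) 1 → |x - y| ≤ 1 := by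
    intro x y hx hy
    rw [abs_le]; constructor <;> [linarith [hx.1, hy.2]; linarith [hx.2, hy.1]]
  -- generic term bound
  have hterm : ∀ a b c d : ℝ, a ∈ Set.Icc (0:ℝ) 1 → b ∈ Set.Icc (0:ℝ) 1 →
      c ∈ Set.Icc (0:ℝ) 1 → d ∈ Set.Icc (0:ℝ) 1 → |a - b| ≤ δ →
      |⟪P a - P b, P c - P d⟫| ≤ 4 * δ := by
    intro a b c d ha hb hc hd hab
    have h1 := norm_graph_le hf ha hb
    have h2 := norm_graph_le hf hc hd
    have h3 := abs_real_inner_le_norm (P a - P b) (P c - P d)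
    have h4 := hone c d hc hd
    nlinarith [norm_nonneg (P a - P b), norm_nonneg (P c - P d), abs_nonneg (a - b),
      abs_nonneg (c - d)]
  have hid := iso_identity (P s₁) (P u₁) (P t₁) (P s₂) (P u₂) (P t₂) e₁ e₂
  have hB : |2 * ⟪P t₂ - P t₁, P u₁ - P s₁⟫| ≤ 16 * δ := by
    rw [hid]
    have b1 := hterm s₂ s₁ t₂ s₁ hs₂ hs₁ ht₂ hs₁ hss
    have b2 := hterm s₂ s₁ t₂ s₂ hs₂ hs₁ ht₂ hs₂ hss
    have b3 := hterm u₂ u₁ t₂ u₁ hu₂ hu₁ ht₂ hu₁ huu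
    have b4 := hterm u₂ u₁ t₂ u₂ hu₂ hu₁ ht₂ hu₂ huu
    have t1 := abs_sub (⟪P s₂ - P s₁, P t₂ - P s₁⟫ + ⟪P s₂ - P s₁, P t₂ - P s₂⟫
        - ⟪P u₂ - P u₁, P t₂ - P u₁⟫) ⟪P u₂ - P u₁, P t₂ - P u₂⟫
    have t2 := abs_sub (⟪P s₂ - P s₁, P t₂ - P s₁⟫ + ⟪P s₂ - P s₁, P t₂ - P s₂⟫)
        ⟪P u₂ - P u₁, P t₂ - P u₁⟫
    have t3 := abs_add_le ⟪P s₂ - P s₁, P t₂ - P s₁⟫ ⟪P s₂ - P s₁, P t₂ - P s₂⟫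
    linarith
  have hsplit : ⟪P t₂ - P t₁, P u₁ - P s₁⟫
      = (t₂ - t₁) * (u₁ - s₁) + ⟪f t₂ - f t₁, f u₁ - f s₁⟫ := inner_graph f t₂ t₁ u₁ s₁
  have hE := lip_inner hf ht₂ ht₁ hu₁ hs₁
  have hDU : |t₂ - t₁| * |u₁ - s₁| ≤ 9 * δ := by
    have habs : |(t₂ - t₁) * (u₁ - s₁)| = |t₂ - t₁| * |u₁ - s₁| := abs_mul _ _
    have hdiff : (t₂ - t₁) * (u₁ - s₁)
        = ⟪P t₂ - P t₁, P u₁ - P s₁⟫ - ⟪f t₂ - f t₁, f u₁ - f s₁⟫ := by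
      rw [hsplit]; ring
    have h5 : |(t₂ - t₁) * (u₁ - s₁)| ≤ |⟪P t₂ - P t₁, P u₁ - P s₁⟫|
        + |⟪f t₂ - f t₁, f u₁ - f s₁⟫| := by
      rw [hdiff]; exact abs_sub _ _
    have h6 : |⟪P t₂ - P t₁, P u₁ - P s₁⟫| ≤ 8 * δ := by
      rw [abs_mul, abs_two] at hB; linarith
    linarith [habs ▸ h5]
  have hpow : (0:ℝ) < 2 ^ k := by positivity
  have hD2 : |t₂ - t₁| * (2 ^ k * δ) ≤ 9 * δ :=
    le_trans (mul_le_mul_of_nonneg_left hsep (abs_nonneg _)) hDU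
  have h9 : |t₂ - t₁| * 2 ^ k ≤ 9 := by
    rw [← mul_assoc] at hD2
    exact le_of_mul_le_mul_right (by linarith) hδ
  rw [zpow_neg, zpow_natCast, show (9:ℝ) * ((2:ℝ) ^ k)⁻¹ = 9 / 2 ^ k by ring,
    le_div_iff₀ hpow]
  exact h9

/-- **The key slab estimate \eqref{numberOfI3}.** Here `n = m + 1 ≥ 2`;
`I₁ = [δa, δ(a+1))`, `I₂ = [δb, δ(b+1))`, `I₃ = [δc, δ(c+1))`. -/
theorem isoTriples_slab_count (m : ℕ) (hm : 1 ≤ m) :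
    ∃ C : ℝ, 0 < C ∧
      ∀ f : ℝ → EuclideanSpace ℝ (Fin m), LipschitzOnWith (1 / 10) f (Set.Icc 0 1) →
      ∀ δ : ℝ, IsDyadicLength δ → δ < 1 →
      ∀ k : ℕ, ∀ a b : ℤ,
        Set.Ico (δ * a) (δ * (a + 1)) ⊆ Set.Ico (0 : ℝ) 1 →
        Set.Ico (δ * b) (δ * (b + 1)) ⊆ Set.Ico (0 : ℝ) 1 →
        (∀ s ∈ Set.Ico (δ * a) (δ * (a + 1)), ∀ t ∈ Set.Ico (δ * b) (δ * (b + 1)),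
          (2 : ℝ) ^ k * δ ≤ |s - t|) →
        ({c : ℤ | ∃ x ∈ isoTriples f, x 0 ∈ Set.Ico (δ * a) (δ * (a + 1)) ∧
            x 1 ∈ Set.Ico (δ * b) (δ * (b + 1)) ∧
            x 2 ∈ Set.Ico (δ * c) (δ * (c + 1))}.ncard : ℝ) ≤
          C * ((2 : ℝ) ^ (-(k : ℤ)) * δ⁻¹ + 1) := by
  refine ⟨20, by norm_num, ?_⟩
  intro f hf δ hδdy hδ1 k a b hI1 hI2 hsep
  obtain ⟨k₀, hk₀⟩ := hδdy
  have hδpos : 0 < δ := by rw [hk₀]; positivity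
  have hδne : δ ≠ 0 := ne_of_gt hδpos
  set R : ℝ := 9 * (2:ℝ) ^ (-(k:ℤ)) with hR
  have hRpos : 0 < R := by rw [hR]; positivity
  set S := {c : ℤ | ∃ x ∈ isoTriples f, x 0 ∈ Set.Ico (δ * a) (δ * (a + 1)) ∧
      x 1 ∈ Set.Ico (δ * b) (δ * (b + 1)) ∧ x 2 ∈ Set.Ico (δ * c) (δ * (c + 1))} with hSdef
  have hRHS : (0:ℝ) ≤ 20 * ((2:ℝ) ^ (-(k:ℤ)) * δ⁻¹ + 1) := by positivity
  rcases S.eq_empty_or_nonempty with hS | ⟨c₀, hc₀⟩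
  · rw [hS]; simpa using hRHS
  obtain ⟨x₁, hx₁, hx₁0, hx₁1, hx₁2⟩ := hc₀
  set s₁ := x₁ 0 with hs₁def
  set u₁ := x₁ 1 with hu₁def
  set t₁ := x₁ 2 with ht₁def
  have hIcc₁ := hx₁.1
  have hsep₁ : 2 ^ k * δ ≤ |u₁ - s₁| := by
    rw [abs_sub_comm]; exact hsep s₁ hx₁0 u₁ hx₁1
  -- narrow interval bound: any witness third coordinate is R-close to t₁
  have hnear : ∀ c ∈ S, ∃ t : ℝ, δ * c ≤ t ∧ t < δ * (c + 1) ∧ |t - t₁| ≤ R := by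
    intro c hc
    obtain ⟨x, hx, hx0, hx1, hx2⟩ := hc
    refine ⟨x 2, hx2.1, hx2.2, ?_⟩
    have hss : |x 0 - s₁| ≤ δ := by
      rw [abs_le]
      have h1 := hx0.1; have h2 := hx0.2; have h3 := hx₁0.1; have h4 := hx₁0.2
      constructor <;> nlinarith
    have huu : |x 1 - u₁| ≤ δ := by
      rw [abs_le]
      have h1 := hx1.1; have h2 := hx1.2; have h3 := hx₁1.1; have h4 := hx₁1.2
      constructor <;> nlinarith
    exact key_est hf hδpos k (hIcc₁ 0) (hIcc₁ 1) (hIcc₁ 2) (hx.1 0) (hx.1 1) (hx.1 2)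
      hx₁.2.2.2.2 hx.2.2.2.2 hss huu hsep₁
  set L : ℤ := ⌈(t₁ - R) / δ⌉ - 1 with hLdef
  set U : ℤ := ⌊(t₁ + R) / δ⌋ with hUdef
  have hsub : S ⊆ Set.Icc L U := by
    intro c hc
    obtain ⟨t, h1, h2, h3⟩ := hnear c hc
    rw [abs_le] at h3
    constructor
    · have : (t₁ - R) / δ ≤ (c:ℝ) + 1 := by
        rw [div_le_iff₀ hδpos]; nlinarith
      have := Int.ceil_le.mpr (by exact_mod_cast this)
      omega
    · refine Int.le_floor.mpr ?_
      rw [le_div_iff₀ hδpos]; nlinarith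
  have hfin : (Set.Icc L U).Finite := Set.finite_Icc L U
  have hcard : (S.ncard : ℝ) ≤ ((Set.Icc L U).ncard : ℝ) := by
    exact_mod_cast Set.ncard_le_ncard hsub hfin
  have hLU : L ≤ U := (hsub ⟨x₁, hx₁, hx₁0, hx₁1, hx₁2⟩).1.trans (hsub ⟨x₁, hx₁, hx₁0, hx₁1, hx₁2⟩).2
  have hIccCard : ((Set.Icc L U).ncard : ℝ) = ((U:ℝ) + 1 - L) := by
    rw [← Finset.coe_Icc, Set.ncard_coe_finset, Int.card_Icc]
    have h0 : (0:ℤ) ≤ U + 1 - L := by omega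
    have h1 : ((U + 1 - L).toNat : ℤ) = U + 1 - L := Int.toNat_of_nonneg h0
    exact_mod_cast h1
  have hU : (U:ℝ) ≤ (t₁ + R) / δ := Int.floor_le _
  have hL : (t₁ - R) / δ - 1 ≤ (L:ℝ) := by
    have := Int.le_ceil ((t₁ - R) / δ)
    rw [hLdef]; push_cast; linarith
  have hdiff : (t₁ + R) / δ - (t₁ - R) / δ = 2 * R * δ⁻¹ := by
    field_simp; ring
  calc (S.ncard : ℝ) ≤ ((U:ℝ) + 1 - L) := hcard.trans_eq hIccCard
    _ ≤ 2 * R * δ⁻¹ + 2 := by linarith [hdiff ▸ (by linarith : (t₁ + R) / δ - (t₁ - R) / δ ≥ (U:ℝ) + 1 - L - 2)]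
    _ ≤ 20 * ((2:ℝ) ^ (-(k:ℤ)) * δ⁻¹ + 1) := by
        rw [hR]
        have : (0:ℝ) ≤ (2:ℝ) ^ (-(k:ℤ)) * δ⁻¹ := by positivity
        nlinarith


end
end

section
/- Let n ≥ 2 be an integer, let f : [0,1] → ℝ^{n−1} be Lipschitz with Lipschitz constant 1/10, let v = (v_1, v') ∈ ℝ × ℝ^{n−1} be a unit vector with |v_1| ≥ 9/10, let a ∈ ℝ and ρ > 0. If x, x' ∈ [0,1] satisfy |v · (x, f(x)) − a| ≤ ρ and |v · (x', f(x')) − a| ≤ ρ (where · is the Euclidean inner product on ℝ^n), then |x − x'| ≤ (5/2)·ρ. -/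
open Filter Set

noncomputable section

/-- **The slab intersection estimate from the proof of Theorem 5.2.** Here `n = m + 1 ≥ 2`,
and the slab is `{z : |v ⬝ z - a| ≤ ρ}` for a unit vector `v` with `|v₁| ≥ 9/10`. -/
theorem lipschitz_graph_slab (m : ℕ) (hm : 1 ≤ m)
    (f : ℝ → EuclideanSpace ℝ (Fin m)) (hf : LipschitzOnWith (1 / 10) f (Set.Icc 0 1))
    (v : EuclideanSpace ℝ (Fin (m + 1))) (hv : ‖v‖ = 1) (hv1 : 9 / 10 ≤ |v 0|)
    (a ρ : ℝ) (hρ : 0 < ρ)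
    (x x' : ℝ) (hx : x ∈ Set.Icc (0 : ℝ) 1) (hx' : x' ∈ Set.Icc (0 : ℝ) 1)
    (h1 : |inner (𝕜 := ℝ) v (graphPoint f x) - a| ≤ ρ)
    (h2 : |inner (𝕜 := ℝ) v (graphPoint f x') - a| ≤ ρ) :
    |x - x'| ≤ (5 / 2) * ρ := by
  set w : EuclideanSpace ℝ (Fin m) :=
    (WithLp.equiv 2 (Fin m → ℝ)).symm (fun i => v i.succ) with hw
  have hinner : ∀ t, inner (𝕜 := ℝ) v (graphPoint f t) = v 0 * t + inner (𝕜 := ℝ) w (f t) := by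
    intro t
    simp only [graphPoint, PiLp.inner_apply, RCLike.inner_apply, starRingEnd_apply, star_trivial,
      WithLp.equiv_symm_apply, PiLp.toLp_apply, WithLp.equiv_apply, hw]
    rw [Fin.sum_univ_succ]
    simp
    ring
  have hwle : ‖w‖ ≤ 1 := by
    rw [← hv]
    rw [EuclideanSpace.norm_eq, EuclideanSpace.norm_eq]
    apply Real.sqrt_le_sqrt
    rw [Fin.sum_univ_succ]
    have : (0:ℝ) ≤ ‖v 0‖ ^ 2 := by positivity
    simp only [hw, WithLp.equiv_symm_apply, PiLp.toLp_apply]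
    linarith
  have hC : |inner (𝕜 := ℝ) w (f x - f x')| ≤ (1/10) * |x - x'| := by
    calc |inner (𝕜 := ℝ) w (f x - f x')| ≤ ‖w‖ * ‖f x - f x'‖ := abs_real_inner_le_norm _ _
    _ ≤ 1 * ‖f x - f x'‖ := by
        apply mul_le_mul_of_nonneg_right hwle (norm_nonneg _)
    _ = dist (f x) (f x') := by rw [one_mul, dist_eq_norm]
    _ ≤ (1/10) * dist x x' := by
        have := hf.dist_le_mul x hx x' hx'
        simpa using this
    _ = (1/10) * |x - x'| := by rw [Real.dist_eq]
  have hkey : v 0 * (x - x') =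
      ((inner (𝕜 := ℝ) v (graphPoint f x) - a) - (inner (𝕜 := ℝ) v (graphPoint f x') - a))
        - inner (𝕜 := ℝ) w (f x - f x') := by
    rw [hinner, hinner, inner_sub_right]
    ring
  have habs : |v 0| * |x - x'| ≤ 2 * ρ + (1/10) * |x - x'| := by
    rw [← abs_mul, hkey]
    calc |_ - inner (𝕜 := ℝ) w (f x - f x')| ≤
        |(inner (𝕜 := ℝ) v (graphPoint f x) - a) - (inner (𝕜 := ℝ) v (graphPoint f x') - a)|
          + |inner (𝕜 := ℝ) w (f x - f x')| := abs_sub _ _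
    _ ≤ (|inner (𝕜 := ℝ) v (graphPoint f x) - a| + |inner (𝕜 := ℝ) v (graphPoint f x') - a|)
          + (1/10) * |x - x'| := add_le_add (abs_sub _ _) hC
    _ ≤ 2 * ρ + (1/10) * |x - x'| := by linarith
  have h9 : 9/10 * |x - x'| ≤ |v 0| * |x - x'| :=
    mul_le_mul_of_nonneg_right hv1 (abs_nonneg _)
  linarith


end
end
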